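/- Let ω₁, …, ω_n be complex roots of unity (each ω_i satisfies ω_i^{m_i} = 1 for some positive integer m_i). Then their average (ω₁ + ⋯ + ω_n)/n is an algebraic integer if and only if either ω₁ + ⋯ + ω_n = 0 or ω₁ = ω₂ = ⋯ = ω_n. -/

import Mathlib

open Polynomial IntermediateField


lemma aux_abs_eq_one {z : ℂ} {M : ℕ} (hM : 0 < M) (h : z ^ M = 1) : ‖z‖ = 1 := by
  have h2 : ‖z‖ ^ M = 1 := by rw [← norm_pow, h, norm_one]
  rcases lt_trichotomy ‖z‖ 1 with h1 | h1 | h1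
  · have := pow_lt_one₀ (norm_nonneg z) h1 hM.ne'; linarith
  · exact h1
  · have := one_lt_pow₀ h1 hM.ne'; linarith

lemma aux_conj_bound (n : ℕ) (hn : 0 < n) (ω : Fin n → ℂ)
    (M : ℕ) (hM : 0 < M) (hωM : ∀ i, ω i ^ M = 1)
    {β : ℂ} (hβ : β ∈ (minpoly ℚ ((∑ i, ω i) / (n : ℂ))).aroots ℂ) :
    ‖β‖ ≤ 1 := by
  set α : ℂ := (∑ i, ω i) / (n : ℂ) with hα
  have hintω : ∀ x ∈ Set.range ω, IsIntegral ℚ x ∧ ((minpoly ℚ x).map (algebraMap ℚ ℂ)).Splits := by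
    rintro x ⟨i, rfl⟩
    refine ⟨⟨X ^ M - C 1, monic_X_pow_sub_C 1 hM.ne', by
      simp [eval₂_sub, eval₂_pow, hωM i]⟩, IsAlgClosed.splits _⟩
  have hωF : ∀ i, ω i ∈ adjoin ℚ (Set.range ω) := fun i => subset_adjoin ℚ _ ⟨i, rfl⟩
  set F := adjoin ℚ (Set.range ω) with hF
  set ωF : Fin n → F := fun i => ⟨ω i, hωF i⟩ with hωFdef
  set α' : F := (∑ i, ωF i) / (n : F) with hα'
  have hcoeα : (α' : ℂ) = α := by
    show F.val α' = α
    rw [hα', map_div₀, map_sum, map_natCast]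
    rfl
  have hαF : α ∈ F := hcoeα ▸ α'.2
  rw [mem_aroots] at hβ
  obtain ⟨φ, hφ⟩ := exists_algHom_adjoin_of_splits_of_aeval hintω hαF hβ.2
  have hgen : (⟨α, hαF⟩ : F) = α' := Subtype.ext hcoeα.symm
  have hβφ : β = φ α' := by rw [← hφ, hgen]
  have hτ : φ α' = (∑ i, φ (ωF i)) / (n : ℂ) := by
    rw [hα', map_div₀, map_sum, map_natCast]
  have habs : ∀ i, ‖φ (ωF i)‖ = 1 := by
    intro i
    refine aux_abs_eq_one hM ?_
    rw [← map_pow]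
    have h1 : (ωF i) ^ M = 1 := by
      apply Subtype.ext
      push_cast
      exact hωM i
    rw [h1, map_one]
  rw [hβφ, hτ, norm_div, Complex.norm_natCast]
  have hsum : ‖∑ i, φ (ωF i)‖ ≤ (n : ℝ) := by
    calc ‖∑ i, φ (ωF i)‖ ≤ ∑ i, ‖φ (ωF i)‖ :=
          norm_sum_le _ _
      _ = (n : ℝ) := by simp [habs]
  exact div_le_one_of_le₀ hsum (by positivity)


lemma aux_eq_one_of_re {z : ℂ} (habs : ‖z‖ = 1) (hre : z.re = 1) : z = 1 := by
  have h := Complex.sq_norm z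
  rw [habs, Complex.normSq_apply, hre] at h
  have him : z.im = 0 := by nlinarith
  exact Complex.ext (by simp [hre]) (by simp [him])

lemma aux_all_eq (n : ℕ) (hn : 0 < n) (ω : Fin n → ℂ)
    (h1 : ∀ i, ‖ω i‖ = 1)
    (h : ‖∑ i, ω i‖ = n) : ∀ i j, ω i = ω j := by
  set u : ℂ := (∑ i, ω i) / (n : ℂ) with hu
  have hn' : (n : ℂ) ≠ 0 := Nat.cast_ne_zero.2 hn.ne'
  have hsum : ∑ i, ω i = (n : ℂ) * u := by rw [hu]; field_simp
  have huabs : ‖u‖ = 1 := by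
    rw [hu, norm_div, h, Complex.norm_natCast, div_self (by exact_mod_cast hn.ne')]
  -- each term's re of conj u * ω i
  have hle : ∀ i, ((starRingEnd ℂ) u * ω i).re ≤ 1 := by
    intro i
    calc ((starRingEnd ℂ) u * ω i).re ≤ ‖(starRingEnd ℂ) u * ω i‖ :=
          Complex.re_le_norm _
      _ = 1 := by rw [norm_mul, Complex.norm_conj, huabs, h1 i, one_mul]
  have hsumre : ∑ i, ((starRingEnd ℂ) u * ω i).re = (n : ℝ) := by
    have : ∑ i, (starRingEnd ℂ) u * ω i = (n : ℝ) := by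
      have h2 : (starRingEnd ℂ) u * ((n:ℂ) * u) = (n:ℂ) * (u * (starRingEnd ℂ) u) := by ring
      rw [← Finset.mul_sum, hsum, h2, Complex.mul_conj, Complex.normSq_eq_norm_sq, huabs]
      norm_num
    calc ∑ i, ((starRingEnd ℂ) u * ω i).re = (∑ i, (starRingEnd ℂ) u * ω i).re := by
          rw [Complex.re_sum]
      _ = (n : ℝ) := by rw [this]; simp
  have hre1 : ∀ i, ((starRingEnd ℂ) u * ω i).re = 1 := by
    by_contra hc
    push_neg at hc
    obtain ⟨i, hi⟩ := hc
    have hilt : ((starRingEnd ℂ) u * ω i).re < 1 := lt_of_le_of_ne (hle i) hi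
    have : ∑ j, ((starRingEnd ℂ) u * ω j).re < ∑ _j : Fin n, (1 : ℝ) :=
      Finset.sum_lt_sum (fun j _ => hle j) ⟨i, Finset.mem_univ i, hilt⟩
    rw [hsumre] at this
    simp at this
  have key : ∀ i, ω i = u := by
    intro i
    have habs : ‖(starRingEnd ℂ) u * ω i‖ = 1 := by
      rw [norm_mul, Complex.norm_conj, huabs, h1 i, one_mul]
    have h1' : (starRingEnd ℂ) u * ω i = 1 := aux_eq_one_of_re habs (hre1 i)
    have : u * ((starRingEnd ℂ) u * ω i) = u := by rw [h1', mul_one]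
    rwa [← mul_assoc, Complex.mul_conj, Complex.normSq_eq_norm_sq, huabs, one_pow, Complex.ofReal_one,
      one_mul] at this
  intro i j
  rw [key i, key j]


lemma aux_mprod_le_one (s : Multiset ℝ) (h : ∀ x ∈ s, 0 ≤ x ∧ x ≤ 1) : s.prod ≤ 1 := by
  induction s using Multiset.induction with
  | empty => simp
  | cons a t ih =>
    have ha := h a (Multiset.mem_cons_self a t)
    have ht : ∀ x ∈ t, 0 ≤ x ∧ x ≤ 1 := fun x hx => h x (Multiset.mem_cons_of_mem hx)
    have htp : t.prod ≤ 1 := ih ht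
    have htn : 0 ≤ t.prod := Multiset.prod_nonneg fun x hx => (ht x hx).1
    rw [Multiset.prod_cons]
    nlinarith [ha.1, ha.2]


theorem average_of_roots_of_unity_isIntegral_iff
    (n : ℕ) (hn : 0 < n) (ω : Fin n → ℂ)
    (hω : ∀ i, ∃ m : ℕ, 0 < m ∧ ω i ^ m = 1) :
    IsIntegral ℤ ((∑ i, ω i) / (n : ℂ)) ↔
      (∑ i, ω i = 0 ∨ ∀ i j, ω i = ω j) := by
  have hn' : (n : ℂ) ≠ 0 := Nat.cast_ne_zero.2 hn.ne'
  constructor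
  · intro hα
    set α : ℂ := (∑ i, ω i) / (n : ℂ) with hαdef
    choose m hm hωm using hω
    set M : ℕ := ∏ i, m i with hMdef
    have hM : 0 < M := Finset.prod_pos (fun i _ => hm i)
    have hωM : ∀ i, ω i ^ M = 1 := by
      intro i
      obtain ⟨c, hc⟩ := Finset.dvd_prod_of_mem m (Finset.mem_univ i)
      rw [hMdef, hc, pow_mul, hωm i, one_pow]
    by_cases hα0 : α = 0
    · left
      rw [hαdef, _root_.div_eq_zero_iff] at hα0
      exact hα0.resolve_right hn'
    · right
      have hintQ : IsIntegral ℚ α := hα.tower_top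
      have habs1 : ∀ i, ‖ω i‖ = 1 := fun i => aux_abs_eq_one (hm i) (hωm i)
      -- the mapped minimal polynomial
      set P : ℂ[X] := (minpoly ℚ α).map (algebraMap ℚ ℂ) with hPdef
      have hPmonic : P.Monic := (minpoly.monic hintQ).map _
      have hProots : P.roots = (minpoly ℚ α).aroots ℂ := rfl
      have hPsplits : P.Splits :=
        IsAlgClosed.splits _
      have hcoeff : P.coeff 0 = (-1) ^ P.natDegree * P.roots.prod :=
        hPsplits.coeff_zero_eq_prod_roots_of_monic hPmonic
      -- coeff 0 is a nonzero integer
      have hgauss : minpoly ℚ α = (minpoly ℤ α).map (algebraMap ℤ ℚ) :=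
        minpoly.isIntegrallyClosed_eq_field_fractions' ℚ hα
      set q0 : ℤ := (minpoly ℤ α).coeff 0 with hq0
      have hc0 : (minpoly ℚ α).coeff 0 = (q0 : ℚ) := by rw [hgauss, coeff_map]; rfl
      have hq0ne : q0 ≠ 0 := by
        intro h0
        apply hα0
        rw [← minpoly.coeff_zero_eq_zero hintQ, hc0, h0, Int.cast_zero]
      have h1le : (1 : ℝ) ≤ ‖P.coeff 0‖ := by
        rw [hPdef, coeff_map, hc0]
        have : ‖((q0 : ℚ) : ℂ)‖ = |(q0 : ℝ)| := by
          rw [show (((q0 : ℚ)) : ℂ) = ((q0 : ℝ) : ℂ) by push_cast; ring, Complex.norm_real, Real.norm_eq_abs]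
        rw [show (algebraMap ℚ ℂ) ((q0 : ℚ)) = (((q0:ℚ)) : ℂ) from rfl, this]
        exact_mod_cast Int.one_le_abs hq0ne
      -- α is a root
      have hαmem : α ∈ P.roots := by
        rw [mem_roots (hPmonic.ne_zero)]
        rw [hPdef, IsRoot, eval_map, ← aeval_def]
        exact minpoly.aeval ℚ α
      -- bound each root
      have hroot_le : ∀ x ∈ P.roots, ‖x‖ ≤ 1 := by
        intro x hx
        exact aux_conj_bound n hn ω M hM hωM (hProots ▸ hx)
      -- product bound
      have hprod : P.roots.prod = α * (P.roots.erase α).prod :=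
        (Multiset.prod_erase hαmem).symm
      have habsprod : ‖P.roots.prod‖ =
          ‖α‖ * ‖(P.roots.erase α).prod‖ := by
        rw [hprod, norm_mul]
      have herase_le : ‖(P.roots.erase α).prod‖ ≤ 1 := by
        rw [show ‖(P.roots.erase α).prod‖
            = ((P.roots.erase α).map (fun x : ℂ => ‖x‖)).prod from map_multiset_prod (normHom : ℂ →*₀ ℝ) _]
        refine aux_mprod_le_one _ ?_
        rintro x hx
        obtain ⟨y, hy, rfl⟩ := Multiset.mem_map.1 hx
        exact ⟨norm_nonneg y, hroot_le y (Multiset.mem_of_mem_erase hy)⟩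
      have hαle : ‖α‖ ≤ 1 := hroot_le α hαmem
      have habsα : ‖α‖ = 1 := by
        have h2 : ‖P.coeff 0‖ = ‖P.roots.prod‖ := by
          simp [hcoeff, norm_mul, norm_pow]
        have h3 : (1:ℝ) ≤ ‖α‖ * ‖(P.roots.erase α).prod‖ := by
          rw [← habsprod, ← h2]; exact h1le
        nlinarith [norm_nonneg α, norm_nonneg ((P.roots.erase α).prod)]
      have hsumabs : ‖∑ i, ω i‖ = n := by
        have : (∑ i, ω i) = α * (n : ℂ) := by
          rw [hαdef, div_mul_cancel₀ _ hn']
        rw [this, norm_mul, habsα, one_mul, Complex.norm_natCast]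
      exact aux_all_eq n hn ω habs1 hsumabs
  · rintro (h0 | heq)
    · rw [h0, zero_div]
      exact isIntegral_zero
    · have i0 : Fin n := ⟨0, hn⟩
      have hsum : ∑ i, ω i = (n : ℂ) * ω i0 := by
        rw [Finset.sum_congr rfl (fun i _ => heq i i0)]
        simp [Finset.card_univ, mul_comm]
      rw [hsum, mul_comm, mul_div_assoc, div_self hn', mul_one]
      obtain ⟨mm, hmm, hωmm⟩ := hω i0
      exact ⟨X ^ mm - C 1, monic_X_pow_sub_C 1 hmm.ne',
        by simp [eval₂_sub, eval₂_pow, hωmm]⟩
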